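/- Let θ₀ ∈ L¹(ℝ³) and define θ(t,x) := ∫_{ℝ³} H(t, x-y) θ₀(y) dy for t > 0 and x ∈ ℝ³. Then for every q ∈ (1, ∞] and every λ ∈ (0,1] there exists a constant c > 0, independent of θ₀, such that for all t, s > 0, setting ξ := min{s,t}, ‖θ(t, ·) - θ(s, ·)‖_{L^q(ℝ³)} ≤ c ξ^{-λ - (3/2)(1 - 1/q)} |t - s|^λ ‖θ₀‖_{L¹}. -/

import Mathlib

open MeasureTheory ENNReal

/-- The heat kernel on `ℝ³`. -/
noncomputable def heatKernel (s : ℝ) (z : EuclideanSpace ℝ (Fin 3)) : ℝ :=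
  (4 * Real.pi * s) ^ (-(3:ℝ)/2) * Real.exp (-‖z‖ ^ 2 / (4 * s))

section Aux

open Real

abbrev E3 := EuclideanSpace ℝ (Fin 3)

/-! ### Young's inequality for convolution with an `L¹` function -/

lemma young_aux {p : ℝ} (hp : 1 < p) {K f : E3 → ℝ} (hK : Continuous K) (hf : Measurable f) :
    ∫⁻ x, (∫⁻ y, (‖K (x - y)‖₊ : ℝ≥0∞) * ‖f y‖₊) ^ p ≤
      (∫⁻ z, (‖K z‖₊ : ℝ≥0∞) ^ p) * (∫⁻ y, (‖f y‖₊ : ℝ≥0∞)) ^ p := by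
  have hp0 : 0 < p := lt_trans one_pos hp
  set r := Real.conjExponent p with hr
  have hpq : p.HolderConjugate r := Real.HolderConjugate.conjExponent hp
  have hr0 : 0 < r := hpq.symm.pos
  set G : E3 → ℝ≥0∞ := fun z => (‖K z‖₊ : ℝ≥0∞) with hG
  set φ : E3 → ℝ≥0∞ := fun y => (‖f y‖₊ : ℝ≥0∞) with hφ
  have hGm : Measurable G := hK.measurable.nnnorm.coe_nnreal_ennreal
  have hφm : Measurable φ := hf.nnnorm.coe_nnreal_ennreal
  -- pointwise Hölder
  have step1 : ∀ x, ∫⁻ y, G (x - y) * φ y ≤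
      (∫⁻ y, G (x - y) ^ p * φ y) ^ (1/p) * (∫⁻ y, φ y) ^ (1/r) := by
    intro x
    have hmeas1 : AEMeasurable (fun y => (G (x - y) ^ p * φ y) ^ (1/p)) volume := by
      exact (((hGm.comp (measurable_const.sub measurable_id)).pow_const p).mul hφm).pow_const _
        |>.aemeasurable
    have hmeas2 : AEMeasurable (fun y => (φ y) ^ (1/r)) volume :=
      (hφm.pow_const _).aemeasurable
    have h := ENNReal.lintegral_mul_le_Lp_mul_Lq volume hpq hmeas1 hmeas2
    have heq : ∀ y, (G (x - y) ^ p * φ y) ^ (1/p) * (φ y) ^ (1/r) = G (x - y) * φ y := by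
      intro y
      rw [ENNReal.mul_rpow_of_nonneg _ _ (by positivity), ← ENNReal.rpow_mul,
        mul_one_div_cancel hp0.ne', ENNReal.rpow_one, mul_assoc,
        ← ENNReal.rpow_add_of_nonneg _ _ (by positivity) (one_div_nonneg.mpr hr0.le),
        one_div, one_div, hpq.inv_add_inv_eq_one, ENNReal.rpow_one]
    have hre : ∀ (y : E3), ((G (x - y) ^ p * φ y) ^ (1/p)) ^ p = G (x - y) ^ p * φ y := by
      intro y
      rw [← ENNReal.rpow_mul, one_div_mul_cancel hp0.ne', ENNReal.rpow_one]
    have hre2 : ∀ (y : E3), ((φ y) ^ (1/r)) ^ r = φ y := by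
      intro y
      rw [← ENNReal.rpow_mul, one_div_mul_cancel hr0.ne', ENNReal.rpow_one]
    calc ∫⁻ y, G (x - y) * φ y
        = ∫⁻ y, ((fun y => (G (x - y) ^ p * φ y) ^ (1/p)) * fun y => (φ y) ^ (1/r)) y := by
          apply lintegral_congr; intro y; simp only [Pi.mul_apply]; rw [heq y]
      _ ≤ (∫⁻ y, ((G (x - y) ^ p * φ y) ^ (1/p)) ^ p) ^ (1/p) *
            (∫⁻ y, ((φ y) ^ (1/r)) ^ r) ^ (1/r) := h
      _ = (∫⁻ y, G (x - y) ^ p * φ y) ^ (1/p) * (∫⁻ y, φ y) ^ (1/r) := by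
          congr 1
          · congr 1; apply lintegral_congr; intro y; exact hre y
          · congr 1; apply lintegral_congr; intro y; exact hre2 y
  -- raise to power p and integrate
  have step2 : ∀ x, (∫⁻ y, G (x - y) * φ y) ^ p ≤
      (∫⁻ y, G (x - y) ^ p * φ y) * (∫⁻ y, φ y) ^ (p/r) := by
    intro x
    calc (∫⁻ y, G (x - y) * φ y) ^ p
        ≤ ((∫⁻ y, G (x - y) ^ p * φ y) ^ (1/p) * (∫⁻ y, φ y) ^ (1/r)) ^ p :=
          ENNReal.rpow_le_rpow (step1 x) hp0.le
      _ = (∫⁻ y, G (x - y) ^ p * φ y) * (∫⁻ y, φ y) ^ (p/r) := by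
          rw [ENNReal.mul_rpow_of_nonneg _ _ hp0.le, ← ENNReal.rpow_mul, ← ENNReal.rpow_mul,
            one_div_mul_cancel hp0.ne', ENNReal.rpow_one]
          congr 2
          field_simp
  have hker : ∀ y : E3, ∫⁻ x, G (x - y) ^ p = ∫⁻ z, G z ^ p := fun y =>
    lintegral_sub_right_eq_self (fun z => G z ^ p) y
  have swap : ∫⁻ x, ∫⁻ y, G (x - y) ^ p * φ y = (∫⁻ z, G z ^ p) * ∫⁻ y, φ y := by
    rw [lintegral_lintegral_swap]
    · calc ∫⁻ y, ∫⁻ x, G (x - y) ^ p * φ y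
          = ∫⁻ y, (∫⁻ x, G (x - y) ^ p) * φ y := by
            apply lintegral_congr; intro y
            exact lintegral_mul_const'' (f := fun x => G (x - y) ^ p) _
              ((hGm.comp (measurable_id.sub measurable_const)).pow_const p).aemeasurable
        _ = ∫⁻ y, (∫⁻ z, G z ^ p) * φ y := by
            apply lintegral_congr; intro y; rw [hker y]
        _ = (∫⁻ z, G z ^ p) * ∫⁻ y, φ y := lintegral_const_mul'' _ hφm.aemeasurable
    · apply AEMeasurable.mul
      · exact (((hGm.comp (measurable_fst.sub measurable_snd)).pow_const p)).aemeasurable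
      · exact (hφm.comp measurable_snd).aemeasurable
  calc ∫⁻ x, (∫⁻ y, G (x - y) * φ y) ^ p
      ≤ ∫⁻ x, (∫⁻ y, G (x - y) ^ p * φ y) * (∫⁻ y, φ y) ^ (p/r) :=
        lintegral_mono step2
    _ = (∫⁻ x, ∫⁻ y, G (x - y) ^ p * φ y) * (∫⁻ y, φ y) ^ (p/r) := by
        apply lintegral_mul_const''
        apply Measurable.aemeasurable
        apply Measurable.lintegral_prod_right
        exact ((hGm.comp (measurable_fst.sub measurable_snd)).pow_const p).mul
          (hφm.comp measurable_snd)
    _ = (∫⁻ z, G z ^ p) * ((∫⁻ y, φ y) * (∫⁻ y, φ y) ^ (p/r)) := by rw [swap]; ring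
    _ = (∫⁻ z, G z ^ p) * (∫⁻ y, φ y) ^ p := by
        congr 1
        have hstep : (∫⁻ y, φ y) * (∫⁻ y, φ y) ^ (p/r) = (∫⁻ y, φ y) ^ ((1:ℝ) + p/r) := by
          rw [ENNReal.rpow_add_of_nonneg _ _ zero_le_one (by positivity), ENNReal.rpow_one]
        rw [hstep]
        congr 1
        have hinv := hpq.inv_add_inv_eq_one
        field_simp at hinv ⊢
        linarith

/-! ### Gaussian integrals -/

lemma gauss_integrable {b : ℝ} (hb : 0 < b) :
    Integrable (fun z : E3 => Real.exp (-b * ‖z‖^2)) := by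
  have h := (GaussianFourier.integrable_cexp_neg_mul_sq_norm_add
    (b := (b:ℂ)) (by simpa using hb) 0 (0:E3)).norm
  apply h.congr
  filter_upwards with v
  simp [Complex.norm_exp]
  left; norm_cast

lemma gauss_lintegral {b : ℝ} (hb : 0 < b) :
    ∫⁻ z : E3, ENNReal.ofReal (Real.exp (-b * ‖z‖^2)) = ENNReal.ofReal ((π/b)^((3:ℝ)/2)) := by
  rw [← ofReal_integral_eq_lintegral_ofReal (gauss_integrable hb)
    (ae_of_all _ fun z => (Real.exp_pos _).le),
    GaussianFourier.integral_rexp_neg_mul_sq_norm hb]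
  norm_num [finrank_euclideanSpace_fin]

lemma kernel_lint_bound {p : ℝ} (hp : 1 ≤ p) {A b : ℝ} (hA : 0 ≤ A) (hb : 0 < b)
    {K : E3 → ℝ} (hKb : ∀ z, |K z| ≤ A * Real.exp (-(‖z‖^2/b))) :
    ∫⁻ z, (‖K z‖₊ : ℝ≥0∞) ^ p ≤ ENNReal.ofReal (A ^ p * (π * b / p) ^ ((3:ℝ)/2)) := by
  have hp0 : 0 < p := lt_of_lt_of_le one_pos hp
  have hpb : 0 < p / b := by positivity
  have step : ∀ z : E3, (‖K z‖₊ : ℝ≥0∞) ^ p ≤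
      ENNReal.ofReal (A ^ p * Real.exp (-(p/b) * ‖z‖^2)) := by
    intro z
    rw [← enorm_eq_nnnorm, Real.enorm_eq_ofReal_abs]
    rw [ENNReal.ofReal_rpow_of_nonneg (abs_nonneg _) hp0.le]
    apply ENNReal.ofReal_le_ofReal
    calc |K z| ^ p ≤ (A * Real.exp (-(‖z‖^2/b))) ^ p := by
          apply Real.rpow_le_rpow (abs_nonneg _) (hKb z) hp0.le
      _ = A ^ p * Real.exp (-(p/b) * ‖z‖^2) := by
          rw [Real.mul_rpow hA (Real.exp_pos _).le]
          congr 1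
          rw [← Real.exp_mul]
          congr 1
          ring
  calc ∫⁻ z, (‖K z‖₊ : ℝ≥0∞) ^ p
      ≤ ∫⁻ z : E3, ENNReal.ofReal (A ^ p * Real.exp (-(p/b) * ‖z‖^2)) := lintegral_mono step
    _ = ENNReal.ofReal (A ^ p) * ∫⁻ z : E3, ENNReal.ofReal (Real.exp (-(p/b) * ‖z‖^2)) := by
        simp_rw [ENNReal.ofReal_mul (by positivity : (0:ℝ) ≤ A ^ p)]
        exact lintegral_const_mul' _ _ ENNReal.ofReal_ne_top
    _ = ENNReal.ofReal (A ^ p) * ENNReal.ofReal ((π/(p/b))^((3:ℝ)/2)) := by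
        rw [gauss_lintegral hpb]
    _ = ENNReal.ofReal (A ^ p * (π * b / p) ^ ((3:ℝ)/2)) := by
        rw [← ENNReal.ofReal_mul (by positivity)]
        congr 3
        field_simp

lemma kernel_norm_bound {p : ℝ} (hp : 1 ≤ p) {A b : ℝ} (hA : 0 ≤ A) (hb : 0 < b)
    {K : E3 → ℝ} (hKb : ∀ z, |K z| ≤ A * Real.exp (-(‖z‖^2/b))) :
    (∫⁻ z, (‖K z‖₊ : ℝ≥0∞) ^ p) ^ (1/p) ≤ ENNReal.ofReal (A * (π * b) ^ ((3:ℝ)/(2*p))) := by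
  have hp0 : 0 < p := lt_of_lt_of_le one_pos hp
  calc (∫⁻ z, (‖K z‖₊ : ℝ≥0∞) ^ p) ^ (1/p)
      ≤ (ENNReal.ofReal (A ^ p * (π * b / p) ^ ((3:ℝ)/2))) ^ (1/p) :=
        ENNReal.rpow_le_rpow (kernel_lint_bound hp hA hb hKb) (by positivity)
    _ = ENNReal.ofReal ((A ^ p * (π * b / p) ^ ((3:ℝ)/2)) ^ (1/p)) := by
        rw [← ENNReal.ofReal_rpow_of_nonneg (by positivity) (by positivity)]
    _ = ENNReal.ofReal (A * (π * b / p) ^ ((3:ℝ)/(2*p))) := by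
        congr 1
        rw [Real.mul_rpow (by positivity) (by positivity),
          ← Real.rpow_mul hA, mul_one_div_cancel (lt_of_lt_of_le one_pos hp).ne',
          Real.rpow_one, ← Real.rpow_mul (by positivity)]
        norm_num
        left
        congr 1
        field_simp
    _ ≤ ENNReal.ofReal (A * (π * b) ^ ((3:ℝ)/(2*p))) := by
        apply ENNReal.ofReal_le_ofReal
        apply mul_le_mul_of_nonneg_left _ hA
        apply Real.rpow_le_rpow (by positivity) _ (by positivity)
        calc π * b / p ≤ π * b / 1 := by
              apply div_le_div_of_nonneg_left (by positivity) one_pos hp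
          _ = π * b := by ring

/-! ### Heat kernel basics -/

lemma heatKernel_repr {u : ℝ} (hu : 0 < u) (z : E3) :
    heatKernel u z = (4*π) ^ (-(3:ℝ)/2) * (u ^ (-(3:ℝ)/2) * Real.exp (-((‖z‖^2/4)/u))) := by
  unfold heatKernel
  rw [Real.mul_rpow (by positivity) hu.le, mul_assoc]
  congr 2
  rw [div_div]
  ring_nf

lemma heatKernel_continuous (u : ℝ) : Continuous (fun z : E3 => heatKernel u z) := by
  unfold heatKernel
  exact continuous_const.mul (Real.continuous_exp.comp
    (((continuous_norm.pow 2).neg).div_const _))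

lemma heatKernel_gauss_bound {u : ℝ} (hu : 0 < u) (z : E3) :
    |heatKernel u z| ≤ ((4*π) ^ (-(3:ℝ)/2) * u ^ (-(3:ℝ)/2)) * Real.exp (-(‖z‖^2/(4*u))) := by
  rw [heatKernel_repr hu z, abs_of_nonneg (by positivity)]
  apply le_of_eq
  rw [mul_assoc]
  congr 2
  rw [div_div]

lemma heatKernel_abs_le {u : ℝ} (hu : 0 < u) (z : E3) :
    |heatKernel u z| ≤ (4*π) ^ (-(3:ℝ)/2) * u ^ (-(3:ℝ)/2) := by
  calc |heatKernel u z| ≤ ((4*π) ^ (-(3:ℝ)/2) * u ^ (-(3:ℝ)/2)) * Real.exp (-(‖z‖^2/(4*u))) :=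
        heatKernel_gauss_bound hu z
    _ ≤ ((4*π) ^ (-(3:ℝ)/2) * u ^ (-(3:ℝ)/2)) * 1 := by
        apply mul_le_mul_of_nonneg_left _ (by positivity)
        apply Real.exp_le_one_iff.mpr
        have : (0:ℝ) ≤ ‖z‖^2/(4*u) := by positivity
        linarith
    _ = (4*π) ^ (-(3:ℝ)/2) * u ^ (-(3:ℝ)/2) := mul_one _

lemma heat_norm_bound {p : ℝ} (hp : 1 ≤ p) {u : ℝ} (hu : 0 < u) :
    (∫⁻ z, (‖heatKernel u z‖₊ : ℝ≥0∞) ^ p) ^ (1/p) ≤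
      ENNReal.ofReal ((4*π) ^ ((3:ℝ)/(2*p) - 3/2) * u ^ ((3:ℝ)/(2*p) - 3/2)) := by
  have h := kernel_norm_bound hp (A := (4*π) ^ (-(3:ℝ)/2) * u ^ (-(3:ℝ)/2)) (b := 4*u)
    (by positivity) (by positivity) (fun z => heatKernel_gauss_bound hu z)
  apply h.trans
  apply ENNReal.ofReal_le_ofReal
  apply le_of_eq
  have h1 : π * (4*u) = (4*π) * u := by ring
  rw [h1, Real.mul_rpow (by positivity) hu.le]
  rw [show (4*π) ^ (-(3:ℝ)/2) * u ^ (-(3:ℝ)/2) * ((4*π) ^ ((3:ℝ)/(2*p)) * u ^ ((3:ℝ)/(2*p)))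
      = ((4*π) ^ (-(3:ℝ)/2) * (4*π) ^ ((3:ℝ)/(2*p))) * (u ^ (-(3:ℝ)/2) * u ^ ((3:ℝ)/(2*p))) by ring]
  rw [← Real.rpow_add (by positivity), ← Real.rpow_add hu]
  congr 2 <;> ring

/-! ### Time regularity of the heat kernel (mean value theorem) -/

lemma hasDerivAt_h {c u : ℝ} (hu : 0 < u) :
    HasDerivAt (fun v : ℝ => v ^ (-(3:ℝ)/2) * Real.exp (-(c/v)))
      ((-(3:ℝ)/2) * u ^ (-(3:ℝ)/2 - 1) * Real.exp (-(c/u))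
        + u ^ (-(3:ℝ)/2) * (Real.exp (-(c/u)) * (c * (u^2)⁻¹))) u := by
  have h1 : HasDerivAt (fun v : ℝ => v ^ (-(3:ℝ)/2)) ((-(3:ℝ)/2) * u ^ (-(3:ℝ)/2 - 1)) u :=
    Real.hasDerivAt_rpow_const (Or.inl hu.ne')
  have h2 : HasDerivAt (fun v : ℝ => -(c/v)) (c * (u^2)⁻¹) u := by
    have := ((hasDerivAt_inv hu.ne').const_mul c).neg
    simpa [div_eq_mul_inv, mul_comm, neg_mul, mul_neg, Pi.neg_def] using this
  exact h1.mul h2.exp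

lemma exp_poly_bound {a : ℝ} (ha : 0 ≤ a) : (3/2 + a) * Real.exp (-a) ≤ 4 * Real.exp (-(a/2)) := by
  have h1 : Real.exp (-a) = Real.exp (-(a/2)) * Real.exp (-(a/2)) := by
    rw [← Real.exp_add]; ring_nf
  have h2 : a * Real.exp (-(a/2)) ≤ 2 := by
    have h3 : a/2 + 1 ≤ Real.exp (a/2) := Real.add_one_le_exp _
    have h5 : Real.exp (-(a/2)) = (Real.exp (a/2))⁻¹ := by rw [← Real.exp_neg]
    rw [h5, mul_inv_le_iff₀ (Real.exp_pos _)]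
    nlinarith [Real.exp_pos (a/2)]
  have h6 : Real.exp (-(a/2)) ≤ 1 := Real.exp_le_one_iff.mpr (by linarith)
  have h7 : (0:ℝ) < Real.exp (-(a/2)) := Real.exp_pos _
  calc (3/2 + a) * Real.exp (-a) = (3/2) * Real.exp (-(a/2)) * Real.exp (-(a/2))
        + (a * Real.exp (-(a/2))) * Real.exp (-(a/2)) := by rw [h1]; ring
    _ ≤ (3/2) * 1 * Real.exp (-(a/2)) + 2 * Real.exp (-(a/2)) := by
        apply add_le_add
        · apply mul_le_mul_of_nonneg_right _ h7.le
          nlinarith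
        · exact mul_le_mul_of_nonneg_right h2 h7.le
    _ ≤ 4 * Real.exp (-(a/2)) := by nlinarith

lemma deriv_bound {c s t u : ℝ} (hc : 0 ≤ c) (hs : 0 < s) (hsu : s ≤ u) (hut : u ≤ t) :
    |(-(3:ℝ)/2) * u ^ (-(3:ℝ)/2 - 1) * Real.exp (-(c/u))
        + u ^ (-(3:ℝ)/2) * (Real.exp (-(c/u)) * (c * (u^2)⁻¹))|
      ≤ 4 * s ^ (-(5:ℝ)/2) * Real.exp (-(c/(2*t))) := by
  have hu : 0 < u := lt_of_lt_of_le hs hsu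
  have ht : 0 < t := lt_of_lt_of_le hu hut
  have ha : 0 ≤ c / u := by positivity
  have hu52 : u ^ (-(3:ℝ)/2 - 1) = u ^ (-(5:ℝ)/2) := by norm_num
  have hu32 : u ^ (-(3:ℝ)/2) * (c * (u^2)⁻¹) = u ^ (-(5:ℝ)/2) * (c/u) := by
    have huu : u ^ (-(3:ℝ)/2) = u ^ (-(5:ℝ)/2) * u := by
      rw [show u ^ (-(5:ℝ)/2) * u = u ^ (-(5:ℝ)/2) * u ^ (1:ℝ) by rw [Real.rpow_one],
        ← Real.rpow_add hu]
      norm_num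
    rw [huu]
    field_simp
  have key : |(-(3:ℝ)/2) * u ^ (-(3:ℝ)/2 - 1) * Real.exp (-(c/u))
      + u ^ (-(3:ℝ)/2) * (Real.exp (-(c/u)) * (c * (u^2)⁻¹))|
      ≤ u ^ (-(5:ℝ)/2) * ((3/2 + c/u) * Real.exp (-(c/u))) := by
    rw [hu52]
    have h1 : (-(3:ℝ)/2) * u ^ (-(5:ℝ)/2) * Real.exp (-(c/u))
        + u ^ (-(3:ℝ)/2) * (Real.exp (-(c/u)) * (c * (u^2)⁻¹))
        = u ^ (-(5:ℝ)/2) * ((-(3:ℝ)/2) * Real.exp (-(c/u)) + (c/u) * Real.exp (-(c/u))) := by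
      linear_combination Real.exp (-(c/u)) * hu32
    rw [h1, abs_mul, abs_of_nonneg (by positivity : (0:ℝ) ≤ u ^ (-(5:ℝ)/2))]
    apply mul_le_mul_of_nonneg_left _ (by positivity)
    calc |(-(3:ℝ)/2) * Real.exp (-(c/u)) + (c/u) * Real.exp (-(c/u))|
        ≤ |(-(3:ℝ)/2) * Real.exp (-(c/u))| + |(c/u) * Real.exp (-(c/u))| := abs_add_le _ _
      _ = (3/2) * Real.exp (-(c/u)) + (c/u) * Real.exp (-(c/u)) := by
          rw [abs_mul, abs_mul, abs_of_nonneg (Real.exp_pos _).le,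
            abs_of_nonneg ha, abs_of_neg (by norm_num : (-(3:ℝ)/2) < 0)]
          norm_num
      _ = (3/2 + c/u) * Real.exp (-(c/u)) := by ring
  calc _ ≤ u ^ (-(5:ℝ)/2) * ((3/2 + c/u) * Real.exp (-(c/u))) := key
    _ ≤ u ^ (-(5:ℝ)/2) * (4 * Real.exp (-(c/u/2))) := by
        apply mul_le_mul_of_nonneg_left _ (by positivity)
        simpa using exp_poly_bound ha
    _ ≤ s ^ (-(5:ℝ)/2) * (4 * Real.exp (-(c/(2*t)))) := by
        apply mul_le_mul
        · exact Real.rpow_le_rpow_of_nonpos hs hsu (by norm_num)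
        · apply mul_le_mul_of_nonneg_left _ (by norm_num)
          apply Real.exp_le_exp.mpr
          have : c/(2*t) ≤ c/u/2 := by
            rw [div_div]
            apply div_le_div_of_nonneg_left hc ?_ ?_ |>.trans_eq rfl
            · positivity
            · nlinarith
          linarith
        · positivity
        · positivity
    _ = 4 * s ^ (-(5:ℝ)/2) * Real.exp (-(c/(2*t))) := by ring

lemma heatKernel_diff_le {s t : ℝ} (hs : 0 < s) (hst : s ≤ t) (z : E3) :
    |heatKernel t z - heatKernel s z| ≤
      (4*π) ^ (-(3:ℝ)/2) * (4 * s ^ (-(5:ℝ)/2) * Real.exp (-(‖z‖^2/(8*t)))) * (t - s) := by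
  have ht : 0 < t := lt_of_lt_of_le hs hst
  set c : ℝ := ‖z‖^2/4 with hcdef
  have hc : 0 ≤ c := by positivity
  set M : ℝ := 4 * s ^ (-(5:ℝ)/2) * Real.exp (-(c/(2*t))) with hM
  have hMVT : |(fun v : ℝ => v ^ (-(3:ℝ)/2) * Real.exp (-(c/v))) t
      - (fun v : ℝ => v ^ (-(3:ℝ)/2) * Real.exp (-(c/v))) s| ≤ M * (t - s) := by
    have := Convex.norm_image_sub_le_of_norm_hasDerivWithin_le
      (f := fun v : ℝ => v ^ (-(3:ℝ)/2) * Real.exp (-(c/v)))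
      (f' := fun u => (-(3:ℝ)/2) * u ^ (-(3:ℝ)/2 - 1) * Real.exp (-(c/u))
        + u ^ (-(3:ℝ)/2) * (Real.exp (-(c/u)) * (c * (u^2)⁻¹)))
      (s := Set.Icc s t) (C := M)
      (fun u hu => (hasDerivAt_h (lt_of_lt_of_le hs hu.1)).hasDerivWithinAt)
      (fun u hu => by
        rw [Real.norm_eq_abs]
        exact deriv_bound hc hs hu.1 hu.2)
      (convex_Icc s t) (Set.left_mem_Icc.mpr hst) (Set.right_mem_Icc.mpr hst)
    rw [Real.norm_eq_abs, Real.norm_eq_abs, abs_of_nonneg (by linarith : (0:ℝ) ≤ t - s)] at this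
    exact this
  have hexp : Real.exp (-(c/(2*t))) = Real.exp (-(‖z‖^2/(8*t))) := by
    congr 1
    rw [hcdef]
    ring
  calc |heatKernel t z - heatKernel s z|
      = (4*π) ^ (-(3:ℝ)/2) * |(fun v : ℝ => v ^ (-(3:ℝ)/2) * Real.exp (-(c/v))) t
          - (fun v : ℝ => v ^ (-(3:ℝ)/2) * Real.exp (-(c/v))) s| := by
        rw [heatKernel_repr ht z, heatKernel_repr hs z, ← mul_sub, abs_mul,
          abs_of_nonneg (by positivity : (0:ℝ) ≤ (4*π) ^ (-(3:ℝ)/2))]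
    _ ≤ (4*π) ^ (-(3:ℝ)/2) * (M * (t - s)) :=
        mul_le_mul_of_nonneg_left hMVT (by positivity)
    _ = (4*π) ^ (-(3:ℝ)/2) * (4 * s ^ (-(5:ℝ)/2) * Real.exp (-(‖z‖^2/(8*t)))) * (t - s) := by
        rw [hM, hexp]
        ring

/-! ### Time Hölder interpolation (real arithmetic) -/

lemma time_holder1 {s t lam : ℝ} (hs : 0 < s) (hst : s ≤ t) (ht2 : t ≤ 2*s)
    (hl0 : 0 < lam) (hl1 : lam ≤ 1) (β' : ℝ) :
    (t - s) * s ^ (β' - 5/2) ≤ s ^ (β' - 3/2 - lam) * (t - s) ^ lam := by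
  have h0 : (0:ℝ) ≤ t - s := by linarith
  have h1 : (t - s : ℝ) = (t - s) ^ lam * (t - s) ^ (1 - lam) := by
    rw [← Real.rpow_add_of_nonneg h0 hl0.le (by linarith)]
    norm_num
  have h2 : (t - s) ^ (1 - lam) ≤ s ^ (1 - lam) :=
    Real.rpow_le_rpow h0 (by linarith) (by linarith)
  calc (t - s) * s ^ (β' - 5/2) = (t - s) ^ lam * ((t - s) ^ (1 - lam) * s ^ (β' - 5/2)) := by
        rw [← mul_assoc, ← h1]
    _ ≤ (t - s) ^ lam * (s ^ (1 - lam) * s ^ (β' - 5/2)) := by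
        apply mul_le_mul_of_nonneg_left _ (by positivity)
        exact mul_le_mul_of_nonneg_right h2 (by positivity)
    _ = s ^ (β' - 3/2 - lam) * (t - s) ^ lam := by
        rw [← Real.rpow_add hs]
        rw [show (1 - lam) + (β' - 5/2) = β' - 3/2 - lam by ring]
        ring

lemma time_holder2 {s t lam : ℝ} (hs : 0 < s) (ht2 : 2*s ≤ t)
    (hl0 : 0 < lam) (β' : ℝ) :
    s ^ (β' - 3/2) ≤ s ^ (β' - 3/2 - lam) * (t - s) ^ lam := by
  have h2 : s ^ lam ≤ (t - s) ^ lam := Real.rpow_le_rpow hs.le (by linarith) hl0.le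
  calc s ^ (β' - 3/2) = s ^ (β' - 3/2 - lam) * s ^ lam := by
        rw [← Real.rpow_add hs]; congr 1; ring
    _ ≤ s ^ (β' - 3/2 - lam) * (t - s) ^ lam :=
        mul_le_mul_of_nonneg_left h2 (by positivity)

/-! ### The constant -/

noncomputable def heatCC (q : ℝ≥0∞) : ℝ :=
  4 * (4*π) ^ (-(3:ℝ)/2) * (16*π) ^ ((3:ℝ)/2 * (1/q.toReal))
    + 2 * (4*π) ^ ((3:ℝ)/2 * (1/q.toReal) - 3/2)

lemma heatCC_pos (q : ℝ≥0∞) : 0 < heatCC q := by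
  unfold heatCC
  positivity

end Aux

section Main
open Real

set_option maxHeartbeats 2000000 in
lemma heat_aux (q : ℝ≥0∞) (hq : 1 < q) (lam : ℝ) (hl0 : 0 < lam) (hl1 : lam ≤ 1)
    (θ₀ : E3 → ℝ) (hθ : Integrable θ₀ volume) (hθm : Measurable θ₀)
    {t s : ℝ} (hs : 0 < s) (hst : s ≤ t) :
    eLpNorm (fun x => (∫ y, heatKernel t (x - y) * θ₀ y)
        - ∫ y, heatKernel s (x - y) * θ₀ y) q volume ≤
      ENNReal.ofReal (heatCC q * s ^ ((3:ℝ)/2 * (1/q.toReal) - 3/2 - lam) * (t - s) ^ lam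
        * ∫ y, |θ₀ y|) := by
  have ht : 0 < t := lt_of_lt_of_le hs hst
  have hts0 : (0:ℝ) ≤ t - s := by linarith
  set β : ℝ := (3:ℝ)/2 * (1/q.toReal) with hβ
  set N : ℝ := ∫ y, |θ₀ y| with hN
  have hN0 : 0 ≤ N := integral_nonneg fun y => abs_nonneg _
  set Kd : E3 → ℝ := fun z => heatKernel t z - heatKernel s z with hKd
  have hKdc : Continuous Kd := (heatKernel_continuous t).sub (heatKernel_continuous s)
  have hβ0 : 0 ≤ β := mul_nonneg (by norm_num) (one_div_nonneg.mpr ENNReal.toReal_nonneg)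
  have hCC := heatCC_pos q
  have hCCeq : heatCC q = 4*(4*π)^(-(3:ℝ)/2)*(16*π)^β + 2*(4*π)^(β - 3/2) := by
    rw [hβ]; rfl
  have hint : ∀ u : ℝ, 0 < u → ∀ x : E3,
      Integrable (fun y => heatKernel u (x - y) * θ₀ y) volume := by
    intro u hu x
    apply hθ.bdd_mul
    · exact ((heatKernel_continuous u).comp
        (continuous_const.sub continuous_id)).aestronglyMeasurable
    · exact ae_of_all _ fun y => by
        rw [Real.norm_eq_abs]; exact heatKernel_abs_le hu _
  have hdiff : ∀ x : E3, (∫ y, heatKernel t (x - y) * θ₀ y)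
      - (∫ y, heatKernel s (x - y) * θ₀ y) = ∫ y, Kd (x - y) * θ₀ y := by
    intro x
    rw [← integral_sub (hint t ht x) (hint s hs x)]
    congr 1
    funext y
    simp only [hKd]
    ring
  set D : ℝ := heatCC q * s ^ (β - 3/2 - lam) * (t - s) ^ lam with hD
  have hD0 : 0 ≤ D :=
    mul_nonneg (mul_nonneg hCC.le (Real.rpow_nonneg hs.le _)) (Real.rpow_nonneg hts0 _)
  rcases eq_or_ne q ⊤ with hqt | hqt
  · -- q = ∞
    have hβtop : β = 0 := by simp [hβ, hqt]
    have hker : ∀ z, |Kd z| ≤ D := by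
      intro z
      rcases le_total t (2*s) with h2 | h2
      · have e1 : Real.exp (-(‖z‖^2/(8*t))) ≤ 1 := by
          apply Real.exp_le_one_iff.mpr
          have : (0:ℝ) ≤ ‖z‖^2/(8*t) := by positivity
          linarith
        calc |Kd z|
            ≤ (4*π)^(-(3:ℝ)/2) * (4 * s^(-(5:ℝ)/2) * Real.exp (-(‖z‖^2/(8*t)))) * (t - s) :=
              heatKernel_diff_le hs hst z
          _ ≤ (4*π)^(-(3:ℝ)/2) * (4 * s^(-(5:ℝ)/2) * 1) * (t - s) := by
              apply mul_le_mul_of_nonneg_right _ hts0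
              apply mul_le_mul_of_nonneg_left _ (by positivity)
              exact mul_le_mul_of_nonneg_left e1 (by positivity)
          _ = (4 * (4*π)^(-(3:ℝ)/2)) * ((t - s) * s ^ ((0:ℝ) - 5/2)) := by
              rw [show (0:ℝ) - 5/2 = -(5:ℝ)/2 by norm_num]; ring
          _ ≤ (4 * (4*π)^(-(3:ℝ)/2)) * (s ^ ((0:ℝ) - 3/2 - lam) * (t - s) ^ lam) :=
              mul_le_mul_of_nonneg_left (time_holder1 hs hst h2 hl0 hl1 0) (by positivity)
          _ ≤ D := by
              rw [hD, hCCeq, hβtop, Real.rpow_zero]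
              have hP2 : (0:ℝ) < (4*π)^((0:ℝ) - 3/2) := by positivity
              nlinarith [mul_nonneg (mul_nonneg hP2.le
                (Real.rpow_nonneg hs.le ((0:ℝ) - 3/2 - lam))) (Real.rpow_nonneg hts0 lam)]
      · calc |Kd z| ≤ |heatKernel t z| + |heatKernel s z| := abs_sub _ _
          _ ≤ (4*π)^(-(3:ℝ)/2) * t^(-(3:ℝ)/2) + (4*π)^(-(3:ℝ)/2) * s^(-(3:ℝ)/2) :=
              add_le_add (heatKernel_abs_le ht z) (heatKernel_abs_le hs z)
          _ ≤ 2 * (4*π)^(-(3:ℝ)/2) * s ^ (-(3:ℝ)/2) := by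
              have hmono : t ^ (-(3:ℝ)/2) ≤ s ^ (-(3:ℝ)/2) :=
                Real.rpow_le_rpow_of_nonpos hs hst (by norm_num)
              have hP : (0:ℝ) ≤ (4*π)^(-(3:ℝ)/2) := by positivity
              nlinarith [mul_le_mul_of_nonneg_left hmono hP]
          _ = 2 * (4*π)^(-(3:ℝ)/2) * s ^ ((0:ℝ) - 3/2) := by norm_num
          _ ≤ 2 * (4*π)^(-(3:ℝ)/2) * (s ^ ((0:ℝ) - 3/2 - lam) * (t - s) ^ lam) :=
              mul_le_mul_of_nonneg_left (time_holder2 hs h2 hl0 0) (by positivity)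
          _ ≤ D := by
              rw [hD, hCCeq, hβtop, Real.rpow_zero]
              have hP : (0:ℝ) < (4*π)^(-(3:ℝ)/2) := by positivity
              nlinarith [mul_nonneg (mul_nonneg hP.le
                (Real.rpow_nonneg hs.le ((0:ℝ) - 3/2 - lam))) (Real.rpow_nonneg hts0 lam)]
    have hbound : ∀ x : E3, ‖(∫ y, heatKernel t (x - y) * θ₀ y)
        - ∫ y, heatKernel s (x - y) * θ₀ y‖ ≤ D * N := by
      intro x
      rw [hdiff x]
      calc ‖∫ y, Kd (x - y) * θ₀ y‖ ≤ ∫ y, ‖Kd (x - y) * θ₀ y‖ :=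
            norm_integral_le_integral_norm _
        _ ≤ ∫ y, D * |θ₀ y| := by
            apply integral_mono_of_nonneg (ae_of_all _ fun y => norm_nonneg _)
              (hθ.abs.const_mul D) (ae_of_all _ fun y => ?_)
            show ‖Kd (x - y) * θ₀ y‖ ≤ D * |θ₀ y|
            rw [Real.norm_eq_abs, abs_mul]
            exact mul_le_mul_of_nonneg_right (hker _) (abs_nonneg _)
        _ = D * N := by rw [integral_const_mul]
    rw [hqt, eLpNorm_exponent_top]
    refine (eLpNormEssSup_le_of_ae_bound (C := D * N) (ae_of_all _ hbound)).trans ?_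
    apply ENNReal.ofReal_le_ofReal
    apply le_of_eq
    rw [hD]
  · -- q finite
    have hp : 1 < q.toReal := by
      rw [← ENNReal.toReal_one]
      exact ENNReal.toReal_strict_mono hqt hq
    have hp0 : 0 < q.toReal := lt_trans one_pos hp
    have hβp : β = 3/(2*q.toReal) := by
      rw [hβ]
      field_simp
    have hKnorm : (∫⁻ z, (‖Kd z‖₊ : ℝ≥0∞) ^ q.toReal) ^ (1/q.toReal) ≤ ENNReal.ofReal D := by
      rcases le_total t (2*s) with h2 | h2
      · have hA0 : (0:ℝ) ≤ 4 * (4*π)^(-(3:ℝ)/2) * s^(-(5:ℝ)/2) * (t - s) := by positivity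
        have hb0 : (0:ℝ) < 8*t := by linarith
        have hKb : ∀ z : E3, |Kd z| ≤ (4 * (4*π)^(-(3:ℝ)/2) * s^(-(5:ℝ)/2) * (t - s))
            * Real.exp (-(‖z‖^2/(8*t))) := by
          intro z
          refine (heatKernel_diff_le hs hst z).trans_eq ?_
          ring
        refine (kernel_norm_bound hp.le hA0 hb0 hKb).trans ?_
        apply ENNReal.ofReal_le_ofReal
        have e0 : (0:ℝ) ≤ 3/(2*q.toReal) := by positivity
        have hx : (π * (8*t)) ^ ((3:ℝ)/(2*q.toReal)) ≤ (16*π) ^ β * s ^ β := by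
          have h1 : π * (8*t) ≤ (16*π) * s := by nlinarith [pi_pos]
          calc (π * (8*t)) ^ ((3:ℝ)/(2*q.toReal)) ≤ ((16*π) * s) ^ ((3:ℝ)/(2*q.toReal)) :=
                Real.rpow_le_rpow (by positivity) h1 e0
            _ = (16*π) ^ β * s ^ β := by
                rw [Real.mul_rpow (by positivity) hs.le, hβp]
        calc (4 * (4*π)^(-(3:ℝ)/2) * s^(-(5:ℝ)/2) * (t - s)) * (π * (8*t)) ^ ((3:ℝ)/(2*q.toReal))
            ≤ (4 * (4*π)^(-(3:ℝ)/2) * s^(-(5:ℝ)/2) * (t - s)) * ((16*π) ^ β * s ^ β) :=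
              mul_le_mul_of_nonneg_left hx hA0
          _ = (4 * (4*π)^(-(3:ℝ)/2) * (16*π)^β) * ((t - s) * (s^(-(5:ℝ)/2) * s^β)) := by ring
          _ = (4 * (4*π)^(-(3:ℝ)/2) * (16*π)^β) * ((t - s) * s^(β - 5/2)) := by
              rw [← Real.rpow_add hs, show -(5:ℝ)/2 + β = β - 5/2 by ring]
          _ ≤ (4 * (4*π)^(-(3:ℝ)/2) * (16*π)^β) * (s^(β - 3/2 - lam) * (t - s)^lam) :=
              mul_le_mul_of_nonneg_left (time_holder1 hs hst h2 hl0 hl1 β) (by positivity)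
          _ ≤ D := by
              rw [hD, hCCeq]
              have hpos : (0:ℝ) ≤ s^(β - 3/2 - lam) * (t - s)^lam :=
                mul_nonneg (Real.rpow_nonneg hs.le _) (Real.rpow_nonneg hts0 _)
              nlinarith [mul_nonneg (mul_nonneg (by norm_num : (0:ℝ) ≤ 2)
                (Real.rpow_nonneg (by positivity : (0:ℝ) ≤ 4*π) (β - 3/2))) hpos]
      · have hmt : AEMeasurable (fun z : E3 => (‖heatKernel t z‖₊ : ℝ≥0∞)) volume :=
          ((heatKernel_continuous t).measurable.nnnorm.coe_nnreal_ennreal).aemeasurable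
        have hms : AEMeasurable (fun z : E3 => (‖heatKernel s z‖₊ : ℝ≥0∞)) volume :=
          ((heatKernel_continuous s).measurable.nnnorm.coe_nnreal_ennreal).aemeasurable
        have htri : (∫⁻ z, (‖Kd z‖₊ : ℝ≥0∞) ^ q.toReal) ^ (1/q.toReal) ≤
            (∫⁻ z, (‖heatKernel t z‖₊ : ℝ≥0∞) ^ q.toReal) ^ (1/q.toReal)
              + (∫⁻ z, (‖heatKernel s z‖₊ : ℝ≥0∞) ^ q.toReal) ^ (1/q.toReal) := by
          refine le_trans ?_ (ENNReal.lintegral_Lp_add_le hmt hms hp.le)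
          apply ENNReal.rpow_le_rpow _ (by positivity)
          apply lintegral_mono
          intro z
          apply ENNReal.rpow_le_rpow _ hp0.le
          simp only [Pi.add_apply]
          have hnn : ‖Kd z‖₊ ≤ ‖heatKernel t z‖₊ + ‖heatKernel s z‖₊ := nnnorm_sub_le _ _
          exact_mod_cast hnn
        refine htri.trans ?_
        refine (add_le_add (heat_norm_bound hp.le ht) (heat_norm_bound hp.le hs)).trans ?_
        rw [← ENNReal.ofReal_add (by positivity) (by positivity)]
        apply ENNReal.ofReal_le_ofReal
        have he32 : (3:ℝ)/(2*q.toReal) - 3/2 = β - 3/2 := by rw [hβp]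
        have hmono : t ^ ((3:ℝ)/(2*q.toReal) - 3/2) ≤ s ^ ((3:ℝ)/(2*q.toReal) - 3/2) := by
          apply Real.rpow_le_rpow_of_nonpos hs hst
          have h32 : (3:ℝ)/(2*q.toReal) ≤ 3/2 := by
            rw [div_le_div_iff₀ (by positivity) (by norm_num : (0:ℝ) < 2)]
            nlinarith
          linarith
        have h4 : (0:ℝ) ≤ (4*π)^((3:ℝ)/(2*q.toReal) - 3/2) := by positivity
        calc (4*π)^((3:ℝ)/(2*q.toReal) - 3/2) * t^((3:ℝ)/(2*q.toReal) - 3/2)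
              + (4*π)^((3:ℝ)/(2*q.toReal) - 3/2) * s^((3:ℝ)/(2*q.toReal) - 3/2)
            ≤ 2 * (4*π)^(β - 3/2) * s^(β - 3/2) := by
              have := mul_le_mul_of_nonneg_left hmono h4
              rw [he32] at this ⊢
              linarith
          _ ≤ 2 * (4*π)^(β - 3/2) * (s^(β - 3/2 - lam) * (t - s)^lam) :=
              mul_le_mul_of_nonneg_left (time_holder2 hs h2 hl0 β) (by positivity)
          _ ≤ D := by
              rw [hD, hCCeq]
              have hpos : (0:ℝ) ≤ s^(β - 3/2 - lam) * (t - s)^lam :=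
                mul_nonneg (Real.rpow_nonneg hs.le _) (Real.rpow_nonneg hts0 _)
              nlinarith [mul_nonneg (mul_nonneg (by norm_num : (0:ℝ) ≤ 4)
                (mul_nonneg (Real.rpow_nonneg (by positivity : (0:ℝ) ≤ 4*π) (-(3:ℝ)/2))
                  (Real.rpow_nonneg (by positivity : (0:ℝ) ≤ 16*π) β))) hpos]
    -- pointwise convolution bound
    have hF : ∀ x : E3, ((‖(∫ y, heatKernel t (x - y) * θ₀ y)
        - ∫ y, heatKernel s (x - y) * θ₀ y‖₊ : ℝ≥0∞))
        ≤ ∫⁻ y, (‖Kd (x - y)‖₊ : ℝ≥0∞) * ‖θ₀ y‖₊ := by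
      intro x
      rw [hdiff x]
      calc (‖∫ y, Kd (x - y) * θ₀ y‖₊ : ℝ≥0∞) ≤ ∫⁻ y, ‖Kd (x - y) * θ₀ y‖₊ :=
          enorm_integral_le_lintegral_enorm _
        _ = ∫⁻ y, (‖Kd (x - y)‖₊ : ℝ≥0∞) * ‖θ₀ y‖₊ := by
          apply lintegral_congr
          intro y
          rw [nnnorm_mul, ENNReal.coe_mul]
    have hNlint : ∫⁻ y, (‖θ₀ y‖₊ : ℝ≥0∞) = ENNReal.ofReal N := by
      change ∫⁻ y, ‖θ₀ y‖ₑ = _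
      rw [← ofReal_integral_norm_eq_lintegral_enorm hθ]
      congr 1
    have hq0 : q ≠ 0 := (lt_trans zero_lt_one hq).ne'
    rw [eLpNorm_eq_lintegral_rpow_enorm_toReal hq0 hqt]
    calc (∫⁻ x, (‖(∫ y, heatKernel t (x - y) * θ₀ y)
            - ∫ y, heatKernel s (x - y) * θ₀ y‖₊ : ℝ≥0∞) ^ q.toReal) ^ (1/q.toReal)
        ≤ (∫⁻ x, (∫⁻ y, (‖Kd (x - y)‖₊ : ℝ≥0∞) * ‖θ₀ y‖₊) ^ q.toReal) ^ (1/q.toReal) := by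
          apply ENNReal.rpow_le_rpow _ (by positivity)
          apply lintegral_mono
          intro x
          exact ENNReal.rpow_le_rpow (hF x) hp0.le
      _ ≤ ((∫⁻ z, (‖Kd z‖₊ : ℝ≥0∞) ^ q.toReal)
            * (∫⁻ y, (‖θ₀ y‖₊ : ℝ≥0∞)) ^ q.toReal) ^ (1/q.toReal) :=
          ENNReal.rpow_le_rpow (young_aux hp hKdc hθm) (by positivity)
      _ = (∫⁻ z, (‖Kd z‖₊ : ℝ≥0∞) ^ q.toReal) ^ (1/q.toReal) * ∫⁻ y, (‖θ₀ y‖₊ : ℝ≥0∞) := by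
          rw [ENNReal.mul_rpow_of_nonneg _ _ (by positivity), ← ENNReal.rpow_mul,
            mul_one_div_cancel hp0.ne', ENNReal.rpow_one]
      _ ≤ ENNReal.ofReal D * ENNReal.ofReal N := by
          rw [hNlint]
          exact mul_le_mul_left hKnorm _
      _ = ENNReal.ofReal (heatCC q * s ^ (β - 3/2 - lam) * (t - s) ^ lam * N) := by
          rw [← ENNReal.ofReal_mul hD0, hD]

end Main

theorem stmt_11 (q : ℝ≥0∞) (hq : 1 < q) (lam : ℝ) (hlam : lam ∈ Set.Ioc (0:ℝ) 1) :
    ∃ c > 0, ∀ θ₀ : EuclideanSpace ℝ (Fin 3) → ℝ, Integrable θ₀ volume →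
      ∀ t s : ℝ, 0 < t → 0 < s →
        eLpNorm (fun x => (∫ y, heatKernel t (x - y) * θ₀ y)
            - ∫ y, heatKernel s (x - y) * θ₀ y) q volume ≤
          ENNReal.ofReal (c * (min s t) ^ (-lam - 3/2 * (1 - 1/q.toReal)) * |t - s| ^ lam
            * ∫ y, |θ₀ y|) := by
  obtain ⟨hl0, hl1⟩ := hlam
  refine ⟨heatCC q, heatCC_pos q, fun θ₀ hθ t s ht hs => ?_⟩
  -- replace θ₀ by a measurable representative
  set g : E3 → ℝ := hθ.1.mk θ₀ with hg
  have hae : θ₀ =ᵐ[volume] g := hθ.1.ae_eq_mk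
  have hgi : Integrable g volume := hθ.congr hae
  have hgm : Measurable g := hθ.1.stronglyMeasurable_mk.measurable
  have hconv_eq : ∀ u : ℝ, ∀ x : E3,
      (∫ y, heatKernel u (x - y) * θ₀ y) = ∫ y, heatKernel u (x - y) * g y := by
    intro u x
    apply integral_congr_ae
    filter_upwards [hae] with y hy
    rw [hy]
  have hNeq : (∫ y, |θ₀ y|) = ∫ y, |g y| := by
    apply integral_congr_ae
    filter_upwards [hae] with y hy
    rw [hy]
  have hfun : (fun x : E3 => (∫ y, heatKernel t (x - y) * θ₀ y)
      - ∫ y, heatKernel s (x - y) * θ₀ y)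
      = fun x : E3 => (∫ y, heatKernel t (x - y) * g y)
      - ∫ y, heatKernel s (x - y) * g y := by
    funext x
    rw [hconv_eq t x, hconv_eq s x]
  rw [hfun, hNeq]
  have hexp : -lam - 3/2 * (1 - 1/q.toReal) = (3:ℝ)/2 * (1/q.toReal) - 3/2 - lam := by ring
  rcases le_total s t with hst | hts
  · rw [min_eq_left hst, abs_of_nonneg (sub_nonneg.mpr hst), hexp]
    exact heat_aux q hq lam hl0 hl1 g hgi hgm hs hst
  · rw [min_eq_right hts, abs_sub_comm, abs_of_nonneg (sub_nonneg.mpr hts), hexp]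
    have h := heat_aux q hq lam hl0 hl1 g hgi hgm ht hts
    have hneg : (fun x : E3 => (∫ y, heatKernel t (x - y) * g y)
        - ∫ y, heatKernel s (x - y) * g y)
        = -(fun x : E3 => (∫ y, heatKernel s (x - y) * g y)
            - ∫ y, heatKernel t (x - y) * g y) := by
      funext x
      simp
    rw [hneg, eLpNorm_neg]
    exact h
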